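/- Let P be a finite PIP. The maximal faces of ⊞_P (under the face-containment order) are exactly the faces C(↓A, A) where A is a maximal consistent antichain of P (maximal under inclusion among consistent antichains) and ↓A is the downset generated by A. Hence A ↦ C(↓A, A) is a bijection from facets of Δ_P to facets of ⊞_P. -/

import Mathlib

open Finset

variable {P : Type*} [Fintype P] [DecidableEq P] [PartialOrder P]

/-- A subset is consistent if it contains no inconsistent pair. -/
def Consistent (incons : P → P → Prop) (S : Finset P) : Prop :=
  ∀ a ∈ S, ∀ b ∈ S, ¬ incons a b

/-- A downset (order ideal). -/
def IsDownset (I : Finset P) : Prop :=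
  ∀ x ∈ I, ∀ y, y ≤ x → y ∈ I

open Classical in
/-- The maximal elements of a finite set. -/
noncomputable def maxElems (I : Finset P) : Finset P :=
  I.filter (fun x => ∀ y ∈ I, ¬ x < y)

open Classical in
/-- The downset generated by a set. -/
noncomputable def downGen (A : Finset P) : Finset P :=
  Finset.univ.filter (fun x => ∃ a ∈ A, x ≤ a)

/-- A consistent antichain: the faces of the crossing complex `Δ_P`. -/
def ConsAntichain (incons : P → P → Prop) (A : Finset P) : Prop :=
  (∀ a ∈ A, ∀ b ∈ A, a ≠ b → ¬ a ≤ b) ∧ Consistent incons A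

/-- A face of the cubical complex `⊞_P`: a pair (I, M) with I a consistent
downset and M ⊆ max I. -/
def IsFace (incons : P → P → Prop) (I M : Finset P) : Prop :=
  IsDownset I ∧ Consistent incons I ∧ M ⊆ maxElems I

/-- The face-containment order on faces of `⊞_P`:
`C(I',M') ⊆ C(I,M)` iff `M' ⊆ M` and `I \ M ⊆ I' ⊆ I`. -/
def FaceLE (p q : Finset P × Finset P) : Prop :=
  p.2 ⊆ q.2 ∧ q.1 \ q.2 ⊆ p.1 ∧ p.1 ⊆ q.1

lemma mem_downGen {A : Finset P} {x : P} : x ∈ downGen A ↔ ∃ a ∈ A, x ≤ a := by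
  simp [downGen]

lemma mem_maxElems {I : Finset P} {x : P} :
    x ∈ maxElems I ↔ x ∈ I ∧ ∀ y ∈ I, ¬ x < y := by
  simp [maxElems]

lemma exists_le_maxElems (I : Finset P) {x : P} (hx : x ∈ I) :
    ∃ m ∈ maxElems I, x ≤ m := by
  classical
  obtain ⟨m, hm, hmax⟩ := (I.filter (fun y => x ≤ y)).exists_maximal
    ⟨x, by simp [hx]⟩
  simp only [mem_filter] at hm
  refine ⟨m, mem_maxElems.mpr ⟨hm.1, fun y hy hlt => ?_⟩, hm.2⟩
  exact absurd (hmax (by simp [hy, le_of_lt (lt_of_le_of_lt hm.2 hlt)]) hlt.le) hlt.not_ge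

lemma downGen_isDownset (A : Finset P) : IsDownset (downGen A) := by
  intro x hx y hy
  obtain ⟨a, ha, hxa⟩ := mem_downGen.mp hx
  exact mem_downGen.mpr ⟨a, ha, hy.trans hxa⟩

lemma maxElems_downGen {incons : P → P → Prop} {A : Finset P}
    (hA : ConsAntichain incons A) : maxElems (downGen A) = A := by
  ext x
  rw [mem_maxElems]
  constructor
  · rintro ⟨hx, hmax⟩
    obtain ⟨a, ha, hxa⟩ := mem_downGen.mp hx
    rcases eq_or_lt_of_le hxa with rfl | hlt
    · exact ha
    · exact absurd hlt (hmax a (mem_downGen.mpr ⟨a, ha, le_rfl⟩))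
  · intro hx
    refine ⟨mem_downGen.mpr ⟨x, hx, le_rfl⟩, fun y hy hlt => ?_⟩
    obtain ⟨a, ha, hya⟩ := mem_downGen.mp hy
    have hxa : x < a := lt_of_lt_of_le hlt hya
    exact hA.1 x hx a ha (ne_of_lt hxa) hxa.le

/-- The maximal faces of `⊞_P` are exactly the faces `C(↓A, A)` with `A` a
maximal consistent antichain of `P`; hence `A ↦ C(↓A, A)` is a bijection from
facets of `Δ_P` to facets of `⊞_P`. -/
theorem maximal_faces_are_maximal_antichains (incons : P → P → Prop)
    (hirr : ∀ a, ¬ incons a a)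
    (hsymm : ∀ a b, incons a b → incons b a)
    (hup : ∀ a b a' b', incons a b → a ≤ a' → b ≤ b' → incons a' b') :
    ∀ I M : Finset P,
      (IsFace incons I M ∧
        ∀ I' M' : Finset P, IsFace incons I' M' →
          FaceLE (I, M) (I', M') → I = I' ∧ M = M') ↔
      (ConsAntichain incons M ∧
        (∀ B : Finset P, ConsAntichain incons B → M ⊆ B → M = B) ∧
        I = downGen M) := by
  classical
  intro I M
  constructor
  · rintro ⟨⟨hdown, hconsI, hM⟩, hmax⟩
    -- Step 1: M = maxElems I
    have hMeq : M = maxElems I := by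
      have h := hmax I (maxElems I) ⟨hdown, hconsI, subset_rfl⟩
        ⟨hM, fun x hx => (mem_sdiff.mp hx).1, subset_rfl⟩
      exact h.2
    -- Step 2: I = downGen M
    have hIeq : I = downGen M := by
      ext x
      constructor
      · intro hx
        obtain ⟨m, hm, hxm⟩ := exists_le_maxElems I hx
        exact mem_downGen.mpr ⟨m, hMeq ▸ hm, hxm⟩
      · intro hx
        obtain ⟨m, hm, hxm⟩ := mem_downGen.mp hx
        exact hdown m ((mem_maxElems.mp (hMeq ▸ hm : m ∈ maxElems I)).1) x hxm
    -- M is a consistent antichain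
    have hMI : ∀ m ∈ M, m ∈ I := fun m hm =>
      (mem_maxElems.mp (hMeq ▸ hm : m ∈ maxElems I)).1
    have hCA : ConsAntichain incons M := by
      constructor
      · intro a ha b hb hne hle
        have := (mem_maxElems.mp (hMeq ▸ ha : a ∈ maxElems I)).2 b (hMI b hb)
        exact this (lt_of_le_of_ne hle hne)
      · intro a ha b hb
        exact hconsI a (hMI a ha) b (hMI b hb)
    refine ⟨hCA, ?_, hIeq⟩
    -- Step 3: maximality of M among consistent antichains
    intro B hB hMB
    by_contra hne
    obtain ⟨b, hbB, hbM⟩ : ∃ b ∈ B, b ∉ M := by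
      by_contra h
      push_neg at h
      exact hne (subset_antisymm hMB h)
    -- the set of candidates to extend M
    set S : Finset P := Finset.univ.filter
      (fun c => c ∉ M ∧ ConsAntichain incons (insert c M)) with hS
    have hmemS : ∀ c, c ∈ S ↔ c ∉ M ∧ ConsAntichain incons (insert c M) := by
      intro c; simp [hS]
    have hbS : b ∈ S := by
      rw [hmemS]
      refine ⟨hbM, ?_, ?_⟩
      · intro x hx y hy hxy hle
        have hx' : x ∈ B := by
          rcases mem_insert.mp hx with rfl | hx'
          · exact hbB
          · exact hMB hx'
        have hy' : y ∈ B := by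
          rcases mem_insert.mp hy with rfl | hy'
          · exact hbB
          · exact hMB hy'
        exact hB.1 x hx' y hy' hxy hle
      · intro x hx y hy
        have hx' : x ∈ B := by
          rcases mem_insert.mp hx with rfl | hx'
          · exact hbB
          · exact hMB hx'
        have hy' : y ∈ B := by
          rcases mem_insert.mp hy with rfl | hy'
          · exact hbB
          · exact hMB hy'
        exact hB.2 x hx' y hy'
    obtain ⟨c, hcS, hcmin⟩ := S.exists_minimal ⟨b, hbS⟩
    obtain ⟨hcM, hcCA⟩ := (hmemS c).mp hcS
    -- c ∉ I
    have hcI : c ∉ I := by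
      intro hc
      rw [hIeq] at hc
      obtain ⟨m, hm, hcm⟩ := mem_downGen.mp hc
      exact hcCA.1 c (mem_insert_self c M) m (mem_insert_of_mem hm)
        (fun h => hcM (h ▸ hm)) hcm
    -- every element strictly below c lies in I
    have hbelow : ∀ x, x < c → x ∈ I := by
      intro x hxc
      by_cases hxM : x ∈ M
      · exact hMI x hxM
      by_cases hxle : ∃ m ∈ M, x ≤ m
      · rw [hIeq]; exact mem_downGen.mpr hxle
      push_neg at hxle
      -- then x ∈ S, contradicting minimality of c
      exfalso
      have hxS : x ∈ S := by
        rw [hmemS]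
        refine ⟨hxM, ?_, ?_⟩
        · intro u hu v hv huv hle
          rcases mem_insert.mp hu with heu | hu'
          · rcases mem_insert.mp hv with hev | hv'
            · exact huv (heu.trans hev.symm)
            · rw [heu] at hle
              exact hxle v hv' hle
          · rcases mem_insert.mp hv with hev | hv'
            · rw [hev] at hle
              have : u < c := lt_of_le_of_lt hle hxc
              exact hcCA.1 u (mem_insert_of_mem hu') c (mem_insert_self c M)
                (ne_of_lt this) this.le
            · exact hCA.1 u hu' v hv' huv hle
        · intro u hu v hv
          rcases mem_insert.mp hu with heu | hu'
          · rcases mem_insert.mp hv with hev | hv'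
            · rw [heu, hev]; exact hirr x
            · rw [heu]
              intro h
              exact hcCA.2 c (mem_insert_self c M) v (mem_insert_of_mem hv')
                (hup x v c v h hxc.le le_rfl)
          · rcases mem_insert.mp hv with hev | hv'
            · rw [hev]
              intro h
              exact hcCA.2 u (mem_insert_of_mem hu') c (mem_insert_self c M)
                (hup u x u c h le_rfl hxc.le)
            · exact hCA.2 u hu' v hv'
      exact absurd (hcmin hxS hxc.le) hxc.not_ge
    -- build the bigger face
    have hface' : IsFace incons (insert c I) (insert c M) := by
      refine ⟨?_, ?_, ?_⟩
      · intro x hx y hy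
        rcases mem_insert.mp hx with rfl | hx'
        · rcases eq_or_lt_of_le hy with rfl | hlt
          · exact mem_insert_self _ _
          · exact mem_insert_of_mem (hbelow y hlt)
        · exact mem_insert_of_mem (hdown x hx' y hy)
      · intro u hu v hv
        rcases mem_insert.mp hu with heu | hu'
        · rcases mem_insert.mp hv with hev | hv'
          · rw [heu, hev]; exact hirr c
          · rw [heu]
            intro h
            rw [hIeq] at hv'
            obtain ⟨m, hm, hvm⟩ := mem_downGen.mp hv'
            exact hcCA.2 c (mem_insert_self c M) m (mem_insert_of_mem hm)
              (hup c v c m h le_rfl hvm)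
        · rcases mem_insert.mp hv with hev | hv'
          · rw [hev]
            intro h
            rw [hIeq] at hu'
            obtain ⟨m, hm, hum⟩ := mem_downGen.mp hu'
            exact hcCA.2 m (mem_insert_of_mem hm) c (mem_insert_self c M)
              (hup u c m c h hum le_rfl)
          · exact hconsI u hu' v hv'
      · intro m hm
        rw [mem_maxElems]
        rcases mem_insert.mp hm with rfl | hm'
        · refine ⟨mem_insert_self _ _, fun y hy hlt => ?_⟩
          rcases mem_insert.mp hy with rfl | hy'
          · exact lt_irrefl _ hlt
          · rw [hIeq] at hy'
            obtain ⟨m', hm'', hym⟩ := mem_downGen.mp hy'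
            have : m < m' := lt_of_lt_of_le hlt hym
            exact hcCA.1 m (mem_insert_self _ _) m' (mem_insert_of_mem hm'')
              (ne_of_lt this) this.le
        · refine ⟨mem_insert_of_mem (hMI m hm'), fun y hy hlt => ?_⟩
          rcases mem_insert.mp hy with rfl | hy'
          · exact hcCA.1 m (mem_insert_of_mem hm') y (mem_insert_self _ _)
              (ne_of_lt hlt) hlt.le
          · exact (mem_maxElems.mp (hMeq ▸ hm' : m ∈ maxElems I)).2 y hy' hlt
    have hle : FaceLE (I, M) (insert c I, insert c M) := by
      refine ⟨subset_insert _ _, ?_, subset_insert _ _⟩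
      intro x hx
      obtain ⟨hx1, hx2⟩ := mem_sdiff.mp hx
      rcases mem_insert.mp hx1 with rfl | hx'
      · exact absurd (mem_insert_self x M) hx2
      · exact hx'
    have := (hmax _ _ hface' hle).1
    exact hcI (this ▸ mem_insert_self c I)
  · rintro ⟨hCA, hmaxA, rfl⟩
    have hface : IsFace incons (downGen M) M := by
      refine ⟨downGen_isDownset M, ?_, ?_⟩
      · intro a ha b hb h
        obtain ⟨a', ha', haa⟩ := mem_downGen.mp ha
        obtain ⟨b', hb', hbb⟩ := mem_downGen.mp hb
        exact hCA.2 a' ha' b' hb' (hup a b a' b' h haa hbb)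
      · rw [maxElems_downGen hCA]
    refine ⟨hface, ?_⟩
    rintro I' M' ⟨hdown', hcons', hM'⟩ ⟨h1, h2, h3⟩
    -- M' is a consistent antichain containing M
    have hM'CA : ConsAntichain incons M' := by
      constructor
      · intro a ha b hb hne hle
        have hb' := mem_maxElems.mp (hM' hb)
        exact (mem_maxElems.mp (hM' ha)).2 b hb'.1 (lt_of_le_of_ne hle hne)
      · intro a ha b hb
        exact hcons' a (mem_maxElems.mp (hM' ha)).1 b (mem_maxElems.mp (hM' hb)).1
    have hMM' : M = M' := hmaxA M' hM'CA h1
    refine ⟨?_, hMM'⟩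
    apply subset_antisymm h3
    intro x hx
    by_cases hxM : x ∈ M'
    · rw [← hMM'] at hxM
      exact mem_downGen.mpr ⟨x, hxM, le_rfl⟩
    · exact h2 (mem_sdiff.mpr ⟨hx, hxM⟩)
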